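/- (Identification of the treated-stratum outcome, ATT identification) Let Y, A, R, A*, Y1, Y0 be Bool-valued random variables on a probability space (Ω, ℙ) such that: (consistency) Y ω = if A ω then Y1 ω else Y0 ω for all ω; (non-experimental data) A ω = A* ω for all ω with R ω = false; (fusion) the triple (Y1, Y0, A*) is independent of R; and ℙ(A* = true ∧ R = false) > 0 and ℙ(A* = true) > 0. Then ℙ(Y1 = true | A* = true) = ℙ(Y = true | A = true ∧ R = false); i.e., the death probability under treatment among those who would naturally take treatment is identified by the observed death frequency among treated individuals in the non-experimental data. -/

import Mathlib

open MeasureTheory ProbabilityTheory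

/-- ATT identification: under consistency, the non-experimental data condition,
and fusion, the death probability under treatment among those who would
naturally take treatment is identified by the observed death frequency among
treated individuals in the non-experimental data. -/
theorem att_identification
    {Ω : Type*} [MeasureSpace Ω] [IsProbabilityMeasure (ℙ : Measure Ω)]
    (Y A R As Y1 Y0 : Ω → Bool)
    (hY : Measurable Y) (hA : Measurable A) (hR : Measurable R)
    (hAs : Measurable As) (hY1 : Measurable Y1) (hY0 : Measurable Y0)
    (hcons : ∀ ω, Y ω = if A ω then Y1 ω else Y0 ω)
    (hnonexp : ∀ ω, R ω = false → A ω = As ω)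
    (hfusion : IndepFun (fun ω => (Y1 ω, Y0 ω, As ω)) R)
    (hpos1 : 0 < (ℙ {ω | As ω = true ∧ R ω = false}).toReal)
    (hpos2 : 0 < (ℙ {ω | As ω = true}).toReal) :
    (ℙ {ω | Y1 ω = true ∧ As ω = true}).toReal /
        (ℙ {ω | As ω = true}).toReal =
      (ℙ {ω | Y ω = true ∧ (A ω = true ∧ R ω = false)}).toReal /
        (ℙ {ω | A ω = true ∧ R ω = false}).toReal := by
  set f : Ω → Bool × Bool × Bool := fun ω => (Y1 ω, Y0 ω, As ω) with hf
  -- set rewriting for numerator on RHS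
  have hset1 : {ω | Y ω = true ∧ (A ω = true ∧ R ω = false)}
      = f ⁻¹' (({true} : Set Bool) ×ˢ ((Set.univ : Set Bool) ×ˢ ({true} : Set Bool)))
        ∩ R ⁻¹' {false} := by
    ext ω
    simp only [Set.mem_setOf_eq, Set.mem_inter_iff, Set.mem_preimage, hf,
      Set.mem_prod, Set.mem_singleton_iff, Set.mem_univ, true_and]
    constructor
    · rintro ⟨hy, ha, hr⟩
      have has := (hnonexp ω hr) ▸ ha
      refine ⟨⟨?_, has⟩, hr⟩
      have := hcons ω
      rw [ha, if_pos rfl] at this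
      rw [← this]; exact hy
    · rintro ⟨⟨hy1, has⟩, hr⟩
      have ha : A ω = true := (hnonexp ω hr).trans has
      refine ⟨?_, ha, hr⟩
      have := hcons ω
      rw [ha, if_pos rfl] at this
      rw [this]; exact hy1
  have hset2 : {ω | A ω = true ∧ R ω = false}
      = f ⁻¹' ((Set.univ : Set Bool) ×ˢ ((Set.univ : Set Bool) ×ˢ ({true} : Set Bool)))
        ∩ R ⁻¹' {false} := by
    ext ω
    simp only [Set.mem_setOf_eq, Set.mem_inter_iff, Set.mem_preimage, hf,
      Set.mem_prod, Set.mem_singleton_iff, Set.mem_univ, true_and]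
    constructor
    · rintro ⟨ha, hr⟩
      exact ⟨(hnonexp ω hr) ▸ ha, hr⟩
    · rintro ⟨has, hr⟩
      exact ⟨(hnonexp ω hr).trans has, hr⟩
  have hm1 : MeasurableSet (({true} : Set Bool) ×ˢ ((Set.univ : Set Bool) ×ˢ ({true} : Set Bool))) :=
    (measurableSet_singleton true).prod (MeasurableSet.univ.prod (measurableSet_singleton true))
  have hm2 : MeasurableSet ((Set.univ : Set Bool) ×ˢ ((Set.univ : Set Bool) ×ˢ ({true} : Set Bool))) :=
    MeasurableSet.univ.prod (MeasurableSet.univ.prod (measurableSet_singleton true))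
  have hmR : MeasurableSet ({false} : Set Bool) := measurableSet_singleton false
  have h1 := hfusion.measure_inter_preimage_eq_mul _ _ hm1 hmR
  have h2 := hfusion.measure_inter_preimage_eq_mul _ _ hm2 hmR
  have hpre1 : f ⁻¹' (({true} : Set Bool) ×ˢ ((Set.univ : Set Bool) ×ˢ ({true} : Set Bool)))
      = {ω | Y1 ω = true ∧ As ω = true} := by
    ext ω
    simp only [hf, Set.mem_preimage, Set.mem_prod, Set.mem_singleton_iff,
      Set.mem_univ, true_and, Set.mem_setOf_eq, and_true]
  have hpre2 : f ⁻¹' ((Set.univ : Set Bool) ×ˢ ((Set.univ : Set Bool) ×ˢ ({true} : Set Bool)))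
      = {ω | As ω = true} := by
    ext ω
    simp only [hf, Set.mem_preimage, Set.mem_prod, Set.mem_singleton_iff,
      Set.mem_univ, true_and, Set.mem_setOf_eq]
  have hset3 : {ω | As ω = true ∧ R ω = false}
      = f ⁻¹' ((Set.univ : Set Bool) ×ˢ ((Set.univ : Set Bool) ×ˢ ({true} : Set Bool)))
        ∩ R ⁻¹' {false} := by
    ext ω
    simp only [Set.mem_setOf_eq, Set.mem_inter_iff, Set.mem_preimage, hf,
      Set.mem_prod, Set.mem_singleton_iff, Set.mem_univ, true_and]
  rw [hset1, hset2, h1, h2, hpre1, hpre2]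
  have hfin : ℙ (R ⁻¹' {false}) ≠ ⊤ := measure_ne_top _ _
  have hfin1 : ℙ {ω | Y1 ω = true ∧ As ω = true} ≠ ⊤ := measure_ne_top _ _
  have hfin2 : ℙ {ω | As ω = true} ≠ ⊤ := measure_ne_top _ _
  rw [ENNReal.toReal_mul, ENNReal.toReal_mul]
  -- positivity of ℙ(R=false)
  have hRpos : 0 < (ℙ (R ⁻¹' {false})).toReal := by
    by_contra h
    push_neg at h
    have h0 : (ℙ (R ⁻¹' {false})).toReal = 0 :=
      le_antisymm h ENNReal.toReal_nonneg
    rw [hset3, h2, ENNReal.toReal_mul, hpre2, h0, mul_zero] at hpos1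
    exact lt_irrefl _ hpos1
  field_simp
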